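/- With the setup of the minus continued fraction decomposition (ω_k = b_k - 1/ω_{k+1}, A_{k+1} = A_k/ω_{k+1}, A_0 = 1), the quantity N(A_k)(ω_k - ω_k') is independent of k; specifically, N(A_k)(ω_k - ω_k') = ω_0 - ω_0' for all k ∈ ℤ, where N(α) = αα' is the field norm. -/

import Mathlib

/-- With the minus continued fraction setup (`ωs k = b k - 1/ωs (k+1)`,
`A (k+1) = A k / ωs (k+1)`, `A 0 = 1`), the quantity `N(A k)(ωs k - (ωs k)')`
is independent of `k`: it equals `ωs 0 - (ωs 0)'` for all `k ∈ ℤ`,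
where `N(α) = α·α'` is the field norm and `'` is the Galois conjugation. -/
theorem norm_times_omega_diff_invariant
    (K : Type*) [Field K] [CharZero K] (hrank : Module.finrank ℚ K = 2)
    (conj : K →+* K) (hconj : ∀ x, conj (conj x) = x)
    (b : ℤ → ℤ) (hb : ∀ k, 2 ≤ b k)
    (ωs : ℤ → K) (hωne : ∀ k, ωs k ≠ 0)
    (hrec : ∀ k, ωs k = (b k : K) - (ωs (k + 1))⁻¹)
    (A : ℤ → K) (hA0 : A 0 = 1) (hA : ∀ k, A (k + 1) = A k / ωs (k + 1)) :
    ∀ k : ℤ, (A k * conj (A k)) * (ωs k - conj (ωs k)) = ωs 0 - conj (ωs 0) := by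
  have hcne : ∀ k, conj (ωs k) ≠ 0 := by
    intro k h
    have := congrArg conj h
    rw [hconj, map_zero] at this
    exact hωne k this
  have step : ∀ k : ℤ,
      (A (k + 1) * conj (A (k + 1))) * (ωs (k + 1) - conj (ωs (k + 1)))
        = (A k * conj (A k)) * (ωs k - conj (ωs k)) := by
    intro k
    have hdiff : ωs k - conj (ωs k)
        = (ωs (k + 1) - conj (ωs (k + 1))) / (ωs (k + 1) * conj (ωs (k + 1))) := by
      have h1 := hrec k
      have h2 := congrArg conj (hrec k)
      rw [map_sub, map_intCast, map_inv₀] at h2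
      rw [h2, h1, sub_sub_sub_cancel_left, inv_sub_inv (hcne _) (hωne _),
        mul_comm (conj (ωs (k + 1)))]
    rw [hA k, map_div₀, hdiff]
    field_simp
  intro k
  induction k using Int.induction_on with
  | zero => simp [hA0]
  | succ n ih => rw [step n]; exact ih
  | pred n ih =>
    have h := step (-(n : ℤ) - 1)
    rw [show (-(n : ℤ) - 1 + 1) = -(n : ℤ) by ring] at h
    rw [← h]
    exact ih
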